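/- Let p_s(x) = (2πs)^{−1/2} exp(−x²/(2s)). Fix M > 0, reals y₁ > y₂, sequences a_n ∈ [1/M, M] and z₁⁽ⁿ⁾, z₂⁽ⁿ⁾ ∈ [−M, M] with z₁⁽ⁿ⁾ − z₂⁽ⁿ⁾ arbitrary, and fix t > 0. Then as n → ∞, a_n √n · det( p_{a_n − t/n}( y_i/√n − z_j⁽ⁿ⁾ ) )_{i,j=1}² / ( (z₁⁽ⁿ⁾ − z₂⁽ⁿ⁾) p_{a_n}(z₁⁽ⁿ⁾) p_{a_n}(z₂⁽ⁿ⁾) ) → y₁ − y₂, uniformly over a_n ∈ [1/M, M] and z₁⁽ⁿ⁾, z₂⁽ⁿ⁾ ∈ [−M, M] with z₁⁽ⁿ⁾ > z₂⁽ⁿ⁾. -/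

import Mathlib

/-- The standard heat kernel `p_s(x) = (2πs)^{-1/2} exp(-x²/(2s))`. -/
noncomputable def heatKernel (s x : ℝ) : ℝ :=
    (Real.sqrt (2 * Real.pi * s))⁻¹ * Real.exp (-x ^ 2 / (2 * s))

open Real Filter

private lemma sqrtN_atTop' : Tendsto (fun n : ℕ => Real.sqrt n) atTop atTop := by
  have h := (tendsto_rpow_atTop (by norm_num : (0:ℝ) < 1/2)).comp tendsto_natCast_atTop_atTop
  refine h.congr fun n => ?_
  simp [Function.comp, Real.sqrt_eq_rpow]

private lemma constDivSqrt' (C : ℝ) :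
    Tendsto (fun n : ℕ => C / Real.sqrt n) atTop (nhds 0) := by
  simpa [div_eq_mul_inv] using sqrtN_atTop'.inv_tendsto_atTop.const_mul C

private lemma hk_mul (s x y : ℝ) (hs : 0 < s) :
    heatKernel s x * heatKernel s y
      = (2 * Real.pi * s)⁻¹ * Real.exp (-((x ^ 2 + y ^ 2) / (2 * s))) := by
  have h2 : (0:ℝ) ≤ 2 * Real.pi * s := by positivity
  unfold heatKernel
  rw [show (Real.sqrt (2*Real.pi*s))⁻¹ * Real.exp (-x^2/(2*s)) *
      ((Real.sqrt (2*Real.pi*s))⁻¹ * Real.exp (-y^2/(2*s)))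
      = (Real.sqrt (2*Real.pi*s) * Real.sqrt (2*Real.pi*s))⁻¹ *
        (Real.exp (-x^2/(2*s)) * Real.exp (-y^2/(2*s))) by rw [mul_inv]; ring,
    Real.mul_self_sqrt h2, ← Real.exp_add]
  congr 1
  field_simp
  ring

private lemma key_identity (a s r y₁ y₂ z₁ z₂ : ℝ) (ha : 0 < a) (hs : 0 < s) (hr : 0 < r)
    (hz : z₂ < z₁) (hy : y₂ < y₁) :
    a * r * (heatKernel s (y₁/r - z₁) * heatKernel s (y₂/r - z₂)
        - heatKernel s (y₁/r - z₂) * heatKernel s (y₂/r - z₁))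
      / ((z₁ - z₂) * heatKernel a z₁ * heatKernel a z₂)
    = (a^2/s^2)
      * Real.exp ((z₁^2 + z₂^2)/(2*a) - ((y₁/r - z₁)^2 + (y₂/r - z₂)^2)/(2*s))
      * ((1 - Real.exp (-((y₁ - y₂)*(z₁ - z₂)/(r*s))))/((y₁ - y₂)*(z₁ - z₂)/(r*s)))
      * (y₁ - y₂) := by
  have hden : (z₁ - z₂) * heatKernel a z₁ * heatKernel a z₂
      = (z₁ - z₂) * ((2*Real.pi*a)⁻¹ * Real.exp (-((z₁^2 + z₂^2)/(2*a)))) := by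
    rw [mul_assoc, hk_mul a z₁ z₂ ha]
  have hnum1 := hk_mul s (y₁/r - z₁) (y₂/r - z₂) hs
  have hnum2 := hk_mul s (y₁/r - z₂) (y₂/r - z₁) hs
  have hA2 : -(((y₁/r - z₂)^2 + (y₂/r - z₁)^2) / (2*s))
      = -(((y₁/r - z₁)^2 + (y₂/r - z₂)^2) / (2*s)) + (-((y₁ - y₂)*(z₁ - z₂)/(r*s))) := by
    field_simp
    ring
  rw [hden, hnum1, hnum2, hA2, Real.exp_add]
  have hE1 : Real.exp ((z₁^2 + z₂^2)/(2*a) - ((y₁/r - z₁)^2 + (y₂/r - z₂)^2)/(2*s))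
      = Real.exp (-(((y₁/r - z₁)^2 + (y₂/r - z₂)^2)/(2*s)))
        / Real.exp (-((z₁^2 + z₂^2)/(2*a))) := by
    rw [← Real.exp_sub]; ring_nf
  rw [hE1]
  have e1 : Real.exp (-(((y₁/r - z₁)^2 + (y₂/r - z₂)^2)/(2*s))) ≠ 0 := Real.exp_ne_zero _
  have e2 : Real.exp (-((z₁^2 + z₂^2)/(2*a))) ≠ 0 := Real.exp_ne_zero _
  have hpi : Real.pi ≠ 0 := Real.pi_ne_zero
  have hz' : z₁ - z₂ ≠ 0 := sub_ne_zero.mpr hz.ne'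
  have hy' : y₁ - y₂ ≠ 0 := sub_ne_zero.mpr hy.ne'
  field_simp

private lemma phi_bounds (c : ℝ) (hc : 0 < c) :
    1 - c ≤ (1 - Real.exp (-c))/c ∧ (1 - Real.exp (-c))/c ≤ 1
      ∧ 0 ≤ (1 - Real.exp (-c))/c := by
  have hub : (1 - Real.exp (-c))/c ≤ 1 := by
    rw [div_le_one hc]
    have := Real.add_one_le_exp (-c)
    linarith
  have h1 : c * Real.exp (-c) ≤ 1 - Real.exp (-c) := by
    have h := Real.add_one_le_exp c
    have h2 := mul_le_mul_of_nonneg_right h (Real.exp_pos (-c)).le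
    rw [← Real.exp_add] at h2
    simp only [add_neg_cancel, Real.exp_zero] at h2
    nlinarith
  have hlb : 1 - c ≤ (1 - Real.exp (-c))/c := by
    rw [le_div_iff₀ hc]
    have h4 := Real.add_one_le_exp (-c)
    nlinarith
  have hnn : 0 ≤ (1 - Real.exp (-c))/c := by
    apply div_nonneg _ hc.le
    have : Real.exp (-c) ≤ 1 := Real.exp_le_one_iff.mpr (by linarith)
    linarith
  exact ⟨hlb, hub, hnn⟩

private lemma combine (A B φ u v w : ℝ) (hA1 : 1 ≤ A) (hAu : A - 1 ≤ u)
    (hBv : |B - 1| ≤ v) (hB0 : 0 < B) (hB3 : B ≤ 3) (hφ0 : 0 ≤ φ) (hφ1 : φ ≤ 1)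
    (hφw : 1 - φ ≤ w) : |A*B*φ - 1| ≤ 3*u + v + w := by
  have e1 : A*B*φ - 1 = (A-1)*(B*φ) + ((B - 1)*φ + (φ - 1)) := by ring
  have hBφ : B*φ ≤ 3 := by nlinarith
  have hb1 : |(A-1)*(B*φ)| ≤ 3*u := by
    rw [abs_mul, abs_of_nonneg (by linarith : (0:ℝ) ≤ A - 1),
      abs_of_nonneg (by positivity : (0:ℝ) ≤ B*φ)]
    nlinarith
  have hb2 : |(B - 1)*φ| ≤ v := by
    rw [abs_mul, abs_of_nonneg hφ0]
    have h0v : 0 ≤ |B - 1| := abs_nonneg _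
    nlinarith
  have hb3 : |φ - 1| ≤ w := by
    rw [abs_sub_comm, abs_of_nonneg (by linarith : (0:ℝ) ≤ 1 - φ)]
    linarith
  calc |A*B*φ - 1| = |(A-1)*(B*φ) + ((B - 1)*φ + (φ - 1))| := by rw [e1]
    _ ≤ |(A-1)*(B*φ)| + |(B - 1)*φ + (φ - 1)| := abs_add_le _ _
    _ ≤ |(A-1)*(B*φ)| + (|(B - 1)*φ| + |φ - 1|) := by
        have := abs_add_le ((B - 1)*φ) (φ - 1); linarith
    _ ≤ 3*u + v + w := by linarith

private lemma A_est (M s a u : ℝ) (hM : 0 < M) (hs_lb : 1/(2*M) ≤ s) (hsa : s ≤ a)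
    (haM : a ≤ M) (hasu : a - s ≤ u) : 1 ≤ a^2/s^2 ∧ a^2/s^2 - 1 ≤ 8*M^3*u := by
  have hs0 : 0 < s := lt_of_lt_of_le (by positivity) hs_lb
  constructor
  · rw [le_div_iff₀ (by positivity)]
    nlinarith
  · have h1 : a^2/s^2 - 1 = (a-s)*(a+s)/s^2 := by field_simp; ring
    rw [h1, div_le_iff₀ (by positivity)]
    have hss : 1/(2*M) * (1/(2*M)) ≤ s * s :=
      mul_le_mul hs_lb hs_lb (by positivity) hs0.le
    have heq : 1/(2*M) * (1/(2*M)) = 1/(4*M^2) := by field_simp; ring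
    have h2 : 1/(4*M^2) ≤ s^2 := by rw [← heq]; nlinarith
    have has0 : (0:ℝ) ≤ a - s := by linarith
    calc (a-s)*(a+s) ≤ (a-s)*(2*M) := by nlinarith
      _ = 8*M^3*(a-s)*(1/(4*M^2)) := by field_simp; ring
      _ ≤ 8*M^3*(a-s)*s^2 :=
          mul_le_mul_of_nonneg_left h2 (mul_nonneg (by positivity) has0)
      _ ≤ 8*M^3*u*s^2 := mul_le_mul_of_nonneg_right
          (mul_le_mul_of_nonneg_left hasu (by positivity)) (sq_nonneg s)

private lemma term_bound (M s a r y z : ℝ) (hM : 0 < M) (hs : 1/(2*M) ≤ s) (hsa : s ≤ a)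
    (haM' : 1/M ≤ a) (hzM : |z| ≤ M) (hr : 1 ≤ r) :
    |z^2/(2*a) - (y/r - z)^2/(2*s)| ≤ M^4*(a-s) + (2*M^2*|y| + M*y^2)/r := by
  have hs0 : 0 < s := lt_of_lt_of_le (by positivity) hs
  have ha0 : 0 < a := lt_of_lt_of_le hs0 hsa
  have hr0 : 0 < r := lt_of_lt_of_le one_pos hr
  have hid : z^2/(2*a) - (y/r - z)^2/(2*s)
      = z^2*(s-a)/(2*a*s) + y*z/(r*s) - y^2/(2*(r*r)*s) := by
    field_simp
    ring
  rw [hid]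
  have h1 : |z^2*(s-a)/(2*a*s)| ≤ M^4*(a-s) := by
    rw [abs_div, abs_mul, abs_of_nonneg (by positivity : (0:ℝ) ≤ 2*a*s)]
    rw [div_le_iff₀ (by positivity)]
    have hzz : z^2 ≤ M^2 := by nlinarith [sq_abs z, abs_nonneg z]
    have hsa' : |s - a| = a - s := by rw [abs_sub_comm]; exact abs_of_nonneg (by linarith)
    have h2as : 1/M^2 ≤ 2*a*s := by
      have : 1/M * (1/(2*M)) ≤ a * s := by
        apply mul_le_mul haM' hs (by positivity) (le_of_lt ha0)
      calc 1/M^2 = 2*(1/M*(1/(2*M))) := by field_simp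
      _ ≤ 2*(a*s) := by linarith
      _ = 2*a*s := by ring
    calc |z^2| * |s - a| = z^2 * (a - s) := by rw [abs_of_nonneg (sq_nonneg z), hsa']
    _ ≤ M^2 * (a-s) := by nlinarith
    _ = M^4*(a-s) * (1/M^2) := by field_simp
    _ ≤ M^4*(a-s) * (2*a*s) :=
        mul_le_mul_of_nonneg_left h2as (mul_nonneg (by positivity) (by linarith))
  have h2 : |y*z/(r*s)| ≤ 2*M^2*|y|/r := by
    rw [abs_div, abs_mul, abs_of_nonneg (by positivity : (0:ℝ) ≤ r*s)]
    rw [div_le_div_iff₀ (by positivity) hr0]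
    calc |y| * |z| * r ≤ |y| * M * r := by gcongr
    _ = 2*M^2*|y| * (r * (1/(2*M))) := by field_simp
    _ ≤ 2*M^2*|y| * (r*s) := by
        apply mul_le_mul_of_nonneg_left _ (by positivity : (0:ℝ) ≤ 2*M^2*|y|)
        gcongr
  have h3 : |y^2/(2*(r*r)*s)| ≤ M*y^2/r := by
    rw [abs_div, abs_of_nonneg (sq_nonneg y), abs_of_nonneg (by positivity : (0:ℝ) ≤ 2*(r*r)*s)]
    rw [div_le_div_iff₀ (by positivity) hr0]
    calc y^2*r = M*y^2*(2*(r*1)*(1/(2*M))) := by field_simp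
    _ ≤ M*y^2*(2*(r*r)*s) := by
        apply mul_le_mul_of_nonneg_left _ (by positivity : (0:ℝ) ≤ M*y^2)
        have hrr : r*1 ≤ r*r := by nlinarith
        gcongr
  calc |z^2*(s-a)/(2*a*s) + y*z/(r*s) - y^2/(2*(r*r)*s)|
      ≤ |z^2*(s-a)/(2*a*s) + y*z/(r*s)| + |y^2/(2*(r*r)*s)| := abs_sub _ _
    _ ≤ |z^2*(s-a)/(2*a*s)| + |y*z/(r*s)| + |y^2/(2*(r*r)*s)| := by
        have := abs_add_le (z^2*(s-a)/(2*a*s)) (y*z/(r*s)); linarith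
    _ ≤ M^4*(a-s) + (2*M^2*|y|/r + M*y^2/r) := by linarith
    _ = M^4*(a-s) + (2*M^2*|y| + M*y^2)/r := by ring

private lemma E_est (M t y₁ y₂ a s r z₁ z₂ : ℝ) (hM : 0 < M) (ht : 0 < t)
    (hs_lb : 1/(2*M) ≤ s) (hsa : s ≤ a) (haM' : 1/M ≤ a)
    (hz1 : |z₁| ≤ M) (hz2 : |z₂| ≤ M) (hr1 : 1 ≤ r) (hast : a - s ≤ t/r) :
    |(z₁^2 + z₂^2)/(2*a) - ((y₁/r - z₁)^2 + (y₂/r - z₂)^2)/(2*s)|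
      ≤ (2*M^4*t + 2*M^2*(|y₁| + |y₂| + 1) + M*(|y₁| + |y₂| + 1)^2)/r := by
  have hr0 : 0 < r := lt_of_lt_of_le one_pos hr1
  have hb1 := term_bound M s a r y₁ z₁ hM hs_lb hsa haM' hz1 hr1
  have hb2 := term_bound M s a r y₂ z₂ hM hs_lb hsa haM' hz2 hr1
  have hsplit : (z₁^2 + z₂^2)/(2*a) - ((y₁/r - z₁)^2 + (y₂/r - z₂)^2)/(2*s)
      = (z₁^2/(2*a) - (y₁/r - z₁)^2/(2*s)) + (z₂^2/(2*a) - (y₂/r - z₂)^2/(2*s)) := by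
    ring
  have htr : |(z₁^2 + z₂^2)/(2*a) - ((y₁/r - z₁)^2 + (y₂/r - z₂)^2)/(2*s)|
      ≤ |z₁^2/(2*a) - (y₁/r - z₁)^2/(2*s)| + |z₂^2/(2*a) - (y₂/r - z₂)^2/(2*s)| :=
    hsplit ▸ abs_add_le _ _
  have hMs : M^4*(a-s) ≤ M^4*(t/r) := by gcongr
  have hq : (2*M^2*|y₁| + M*y₁^2) + (2*M^2*|y₂| + M*y₂^2)
      ≤ 2*M^2*(|y₁| + |y₂| + 1) + M*(|y₁| + |y₂| + 1)^2 := by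
    nlinarith [sq_abs y₁, sq_abs y₂, abs_nonneg y₁, abs_nonneg y₂,
      mul_nonneg (abs_nonneg y₁) (abs_nonneg y₂)]
  have hqr : (2*M^2*|y₁| + M*y₁^2)/r + (2*M^2*|y₂| + M*y₂^2)/r
      ≤ (2*M^2*(|y₁| + |y₂| + 1) + M*(|y₁| + |y₂| + 1)^2)/r := by
    rw [← add_div]
    gcongr
  have hfin : (2*M^4*t + 2*M^2*(|y₁| + |y₂| + 1) + M*(|y₁| + |y₂| + 1)^2)/r
      = 2*(M^4*(t/r)) + (2*M^2*(|y₁| + |y₂| + 1) + M*(|y₁| + |y₂| + 1)^2)/r := by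
    field_simp
    ring
  linarith

private lemma c_est (M y₁ y₂ s r z₁ z₂ : ℝ) (hM : 0 < M) (hy : y₂ < y₁)
    (hs_lb : 1/(2*M) ≤ s) (hz1 : z₁ ≤ M) (hz2 : -M ≤ z₂) (hz : z₂ < z₁) (hr1 : 1 ≤ r) :
    0 < (y₁ - y₂)*(z₁ - z₂)/(r*s) ∧ (y₁ - y₂)*(z₁ - z₂)/(r*s) ≤ 4*M^2*(y₁-y₂)/r := by
  have hs0 : 0 < s := lt_of_lt_of_le (by positivity) hs_lb
  have hr0 : 0 < r := lt_of_lt_of_le one_pos hr1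
  have hdy : 0 < y₁ - y₂ := sub_pos.mpr hy
  constructor
  · exact div_pos (mul_pos hdy (sub_pos.mpr hz)) (mul_pos hr0 hs0)
  · rw [div_le_div_iff₀ (mul_pos hr0 hs0) hr0]
    calc (y₁-y₂)*(z₁-z₂)*r ≤ (y₁-y₂)*(2*M)*r := by gcongr; linarith
    _ = 4*M^2*(y₁-y₂) * (r * (1/(2*M))) := by field_simp; ring
    _ ≤ 4*M^2*(y₁-y₂) * (r*s) := by
        apply mul_le_mul_of_nonneg_left _ (by positivity : (0:ℝ) ≤ 4*M^2*(y₁-y₂))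
        gcongr

private lemma main_est (M t y₁ y₂ a s r z₁ z₂ : ℝ)
    (hM : 0 < M) (ht : 0 < t) (hy : y₂ < y₁)
    (haM' : 1/M ≤ a) (haM : a ≤ M) (hs_lb : 1/(2*M) ≤ s) (hsa : s ≤ a)
    (hr1 : 1 ≤ r) (hast : a - s ≤ t/r)
    (hz1l : -M ≤ z₁) (hz1u : z₁ ≤ M) (hz2l : -M ≤ z₂) (hz2u : z₂ ≤ M) (hz : z₂ < z₁)
    (hCE : (2*M^4*t + 2*M^2*(|y₁| + |y₂| + 1) + M*(|y₁| + |y₂| + 1)^2)/r ≤ 1) :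
    |(a^2/s^2)
        * Real.exp ((z₁^2 + z₂^2)/(2*a) - ((y₁/r - z₁)^2 + (y₂/r - z₂)^2)/(2*s))
        * ((1 - Real.exp (-((y₁ - y₂)*(z₁ - z₂)/(r*s))))/((y₁ - y₂)*(z₁ - z₂)/(r*s)))
        - 1|
      ≤ (24*M^3*t + 2*(2*M^4*t + 2*M^2*(|y₁| + |y₂| + 1) + M*(|y₁| + |y₂| + 1)^2)
          + 4*M^2*(y₁-y₂))/r := by
  have hr0 : 0 < r := lt_of_lt_of_le one_pos hr1
  have hs0 : 0 < s := lt_of_lt_of_le (by positivity) hs_lb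
  obtain ⟨hA1, hA2⟩ := A_est M s a (t/r) hM hs_lb hsa haM hast
  have hE := E_est M t y₁ y₂ a s r z₁ z₂ hM ht hs_lb hsa haM'
    (abs_le.mpr ⟨hz1l, hz1u⟩) (abs_le.mpr ⟨hz2l, hz2u⟩) hr1 hast
  have hE1 : |(z₁^2 + z₂^2)/(2*a) - ((y₁/r - z₁)^2 + (y₂/r - z₂)^2)/(2*s)| ≤ 1 :=
    hE.trans hCE
  have hBv := Real.abs_exp_sub_one_le hE1
  have hB0 := Real.exp_pos ((z₁^2 + z₂^2)/(2*a) - ((y₁/r - z₁)^2 + (y₂/r - z₂)^2)/(2*s))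
  have hB3 : Real.exp ((z₁^2 + z₂^2)/(2*a) - ((y₁/r - z₁)^2 + (y₂/r - z₂)^2)/(2*s)) ≤ 3 := by
    have h1 : Real.exp ((z₁^2 + z₂^2)/(2*a) - ((y₁/r - z₁)^2 + (y₂/r - z₂)^2)/(2*s))
        ≤ Real.exp 1 := Real.exp_le_exp.mpr ((le_abs_self _).trans hE1)
    have := Real.exp_one_lt_d9
    linarith
  obtain ⟨hc0, hc_ub⟩ := c_est M y₁ y₂ s r z₁ z₂ hM hy hs_lb hz1u hz2l hz hr1
  obtain ⟨hφ_lb, hφ_ub, hφ0⟩ := phi_bounds ((y₁ - y₂)*(z₁ - z₂)/(r*s)) hc0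
  have hφw : 1 - (1 - Real.exp (-((y₁ - y₂)*(z₁ - z₂)/(r*s))))/((y₁ - y₂)*(z₁ - z₂)/(r*s))
      ≤ 4*M^2*(y₁-y₂)/r := by linarith
  have hcomb := combine _ _ _ (8*M^3*(t/r))
    (2*|(z₁^2 + z₂^2)/(2*a) - ((y₁/r - z₁)^2 + (y₂/r - z₂)^2)/(2*s)|)
    (4*M^2*(y₁-y₂)/r) hA1 hA2 hBv hB0 hB3 hφ0 hφ_ub hφw
  have hfin : (24*M^3*t + 2*(2*M^4*t + 2*M^2*(|y₁| + |y₂| + 1) + M*(|y₁| + |y₂| + 1)^2)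
      + 4*M^2*(y₁-y₂))/r
      = 3*(8*M^3*(t/r))
        + 2*((2*M^4*t + 2*M^2*(|y₁| + |y₂| + 1) + M*(|y₁| + |y₂| + 1)^2)/r)
        + 4*M^2*(y₁-y₂)/r := by
    field_simp
    ring
  rw [hfin]
  linarith

theorem stmt_16 (M t y₁ y₂ : ℝ) (hM : 0 < M) (ht : 0 < t) (hy : y₂ < y₁) :
    ∀ ε : ℝ, 0 < ε → ∃ N : ℕ, ∀ n : ℕ, N ≤ n →
      ∀ a z₁ z₂ : ℝ, a ∈ Set.Icc (1 / M) M → z₁ ∈ Set.Icc (-M) M →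
        z₂ ∈ Set.Icc (-M) M → z₂ < z₁ →
        |a * Real.sqrt n
            * (heatKernel (a - t / n) (y₁ / Real.sqrt n - z₁)
                 * heatKernel (a - t / n) (y₂ / Real.sqrt n - z₂)
               - heatKernel (a - t / n) (y₁ / Real.sqrt n - z₂)
                 * heatKernel (a - t / n) (y₂ / Real.sqrt n - z₁))
            / ((z₁ - z₂) * heatKernel a z₁ * heatKernel a z₂)
          - (y₁ - y₂)| < ε := by
  intro ε hε
  have hdy : 0 < y₁ - y₂ := sub_pos.mpr hy
  have hev : ∀ᶠ n : ℕ in atTop, 1 ≤ n ∧ t/(n:ℝ) < 1/(2*M)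
      ∧ (2*M^4*t + 2*M^2*(|y₁| + |y₂| + 1) + M*(|y₁| + |y₂| + 1)^2)/Real.sqrt n < 1
      ∧ (y₁-y₂)*((24*M^3*t + 2*(2*M^4*t + 2*M^2*(|y₁| + |y₂| + 1)
          + M*(|y₁| + |y₂| + 1)^2) + 4*M^2*(y₁-y₂))/Real.sqrt n) < ε := by
    have e1 := eventually_ge_atTop (1:ℕ)
    have e2 := (tendsto_const_div_atTop_nhds_zero_nat t).eventually_lt_const
      (show (0:ℝ) < 1/(2*M) by positivity)
    have e3 := (constDivSqrt' (2*M^4*t + 2*M^2*(|y₁| + |y₂| + 1)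
      + M*(|y₁| + |y₂| + 1)^2)).eventually_lt_const one_pos
    have e4 := (constDivSqrt' ((y₁-y₂)*(24*M^3*t + 2*(2*M^4*t + 2*M^2*(|y₁| + |y₂| + 1)
      + M*(|y₁| + |y₂| + 1)^2) + 4*M^2*(y₁-y₂)))).eventually_lt_const hε
    filter_upwards [e1, e2, e3, e4] with n h1 h2 h3 h4
    exact ⟨h1, h2, h3, by rw [mul_div_assoc] at h4; exact h4⟩
  obtain ⟨N, hN⟩ := eventually_atTop.mp hev
  refine ⟨N, fun n hn a z₁ z₂ ha hz1m hz2m hz => ?_⟩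
  obtain ⟨hn1, htn, hCEn, hCFn⟩ := hN n hn
  have hn1' : (1:ℝ) ≤ (n:ℝ) := by exact_mod_cast hn1
  have hr1 : 1 ≤ Real.sqrt n := by
    rw [show (1:ℝ) = Real.sqrt 1 from Real.sqrt_one.symm]
    exact Real.sqrt_le_sqrt hn1'
  have hr0 : (0:ℝ) < Real.sqrt n := lt_of_lt_of_le one_pos hr1
  have hrr : Real.sqrt n * Real.sqrt n = (n:ℝ) := Real.mul_self_sqrt (by positivity)
  have hrn : Real.sqrt n ≤ (n:ℝ) := by nlinarith
  have haM' : 1/M ≤ a := ha.1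
  have haM : a ≤ M := ha.2
  have ha0 : 0 < a := lt_of_lt_of_le (by positivity) haM'
  have htn0 : 0 < t/(n:ℝ) := by positivity
  have hhalf : 1/M - 1/(2*M) = 1/(2*M) := by field_simp; ring
  have hs_lb : 1/(2*M) ≤ a - t/(n:ℝ) := by linarith
  have hs0 : (0:ℝ) < a - t/(n:ℝ) := lt_of_lt_of_le (by positivity) hs_lb
  have hsa : a - t/(n:ℝ) ≤ a := by linarith
  have hast : a - (a - t/(n:ℝ)) ≤ t/Real.sqrt n := by
    have h1 : t/(n:ℝ) ≤ t/Real.sqrt n := by gcongr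
    linarith
  rw [key_identity a (a - t/(n:ℝ)) (Real.sqrt n) y₁ y₂ z₁ z₂ ha0 hs0 hr0 hz hy]
  have hest := main_est M t y₁ y₂ a (a - t/(n:ℝ)) (Real.sqrt n) z₁ z₂ hM ht hy
    haM' haM hs_lb hsa hr1 hast hz1m.1 hz1m.2 hz2m.1 hz2m.2 hz hCEn.le
  have hgoal : (a^2/(a - t/(n:ℝ))^2)
        * Real.exp ((z₁^2 + z₂^2)/(2*a)
          - ((y₁/Real.sqrt n - z₁)^2 + (y₂/Real.sqrt n - z₂)^2)/(2*(a - t/(n:ℝ))))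
        * ((1 - Real.exp (-((y₁ - y₂)*(z₁ - z₂)/(Real.sqrt n*(a - t/(n:ℝ))))))
            /((y₁ - y₂)*(z₁ - z₂)/(Real.sqrt n*(a - t/(n:ℝ)))))
        * (y₁ - y₂) - (y₁ - y₂)
      = ((a^2/(a - t/(n:ℝ))^2)
        * Real.exp ((z₁^2 + z₂^2)/(2*a)
          - ((y₁/Real.sqrt n - z₁)^2 + (y₂/Real.sqrt n - z₂)^2)/(2*(a - t/(n:ℝ))))
        * ((1 - Real.exp (-((y₁ - y₂)*(z₁ - z₂)/(Real.sqrt n*(a - t/(n:ℝ))))))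
            /((y₁ - y₂)*(z₁ - z₂)/(Real.sqrt n*(a - t/(n:ℝ))))) - 1) * (y₁ - y₂) := by
    ring
  rw [hgoal, abs_mul, abs_of_pos hdy]
  calc _ ≤ ((24*M^3*t + 2*(2*M^4*t + 2*M^2*(|y₁| + |y₂| + 1)
          + M*(|y₁| + |y₂| + 1)^2) + 4*M^2*(y₁-y₂))/Real.sqrt n) * (y₁ - y₂) :=
        mul_le_mul_of_nonneg_right hest hdy.le
    _ = (y₁-y₂)*((24*M^3*t + 2*(2*M^4*t + 2*M^2*(|y₁| + |y₂| + 1)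
          + M*(|y₁| + |y₂| + 1)^2) + 4*M^2*(y₁-y₂))/Real.sqrt n) := by ring
    _ < ε := hCFn
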